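/- Let U be a nonempty finite ground set, let f : Finset U → ℝ be a normalized, monotone, submodular set function, let 0 < β ≤ 1, let k ≥ 1, and let S_0 = ∅, S_1, S_2, ... be a β-approximate greedy sequence for f. Then for every set OPT ⊆ U with |OPT| ≤ k and every i ≥ 0, f(S_i) ≥ (1 − (1 − β/k)^i) · f(OPT). -/

import Mathlib

/-- Submodularity implies subadditivity of marginal gains. -/
lemma submod_sum_bound
    {U : Type*} [Fintype U] [DecidableEq U]
    (f : Finset U → ℝ)
    (hsub : ∀ X Y : Finset U, X ⊆ Y → ∀ u : U,
      f (insert u X) - f X ≥ f (insert u Y) - f Y) :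
    ∀ (A T : Finset U), f (T ∪ A) - f T ≤ ∑ u ∈ A, (f (insert u T) - f T) := by
  intro A
  induction A using Finset.induction_on with
  | empty => intro T; simp
  | insert a A ha ih =>
    intro T
    have h1 : T ∪ insert a A = insert a (T ∪ A) := by
      ext x; simp [or_comm, or_left_comm, or_assoc]
    have h2 := hsub T (T ∪ A) Finset.subset_union_left a
    have h3 := ih T
    rw [Finset.sum_insert ha, h1]
    linarith

/-- Induction claim in the proof of Lemma 1: a β-approximate greedy
sequence satisfies f(S_i) ≥ (1 − (1 − β/k)^i)·f(OPT) for every i, whenever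
|OPT| ≤ k. -/
theorem greedy_induction_bound
    {U : Type*} [Fintype U] [DecidableEq U] [Nonempty U]
    (f : Finset U → ℝ)
    (hnorm : f ∅ = 0)
    (hmono : ∀ X Y : Finset U, X ⊆ Y → f X ≤ f Y)
    (hsub : ∀ X Y : Finset U, X ⊆ Y → ∀ u : U,
      f (insert u X) - f X ≥ f (insert u Y) - f Y)
    (β : ℝ) (hβ0 : 0 < β) (hβ1 : β ≤ 1)
    (k : ℕ) (hk : 1 ≤ k)
    (S : ℕ → Finset U)
    (hS0 : S 0 = ∅)
    (hgreedy : ∀ i : ℕ, ∃ u : U, S (i + 1) = insert u (S i) ∧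
      f (S (i + 1)) - f (S i) ≥
        β * Finset.univ.sup' Finset.univ_nonempty
          (fun u' : U => f (insert u' (S i)) - f (S i)))
    (OPT : Finset U) (hOPT : OPT.card ≤ k) :
    ∀ i : ℕ, f (S i) ≥ (1 - (1 - β / k) ^ i) * f OPT := by
  have hk' : (1 : ℝ) ≤ (k : ℝ) := by exact_mod_cast hk
  have hkpos : (0 : ℝ) < k := by linarith
  have hβk0 : 0 < β / k := div_pos hβ0 hkpos
  have hβk1 : β / k ≤ 1 := by
    rw [div_le_one hkpos]; linarith
  have hfOPT : 0 ≤ f OPT := by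
    have := hmono ∅ OPT (Finset.empty_subset _)
    linarith [hnorm ▸ this]
  intro i
  induction i with
  | zero => simp [hS0, hnorm]
  | succ i ih =>
    obtain ⟨u, -, hgain⟩ := hgreedy i
    set M := Finset.univ.sup' Finset.univ_nonempty
      (fun u' : U => f (insert u' (S i)) - f (S i)) with hM
    -- each marginal gain bounded by M
    have hle : ∀ u' : U, f (insert u' (S i)) - f (S i) ≤ M :=
      fun u' => Finset.le_sup' (fun u' : U => f (insert u' (S i)) - f (S i)) (Finset.mem_univ u')
    have hM0 : 0 ≤ M := by
      obtain ⟨u0⟩ := ‹Nonempty U›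
      have := hmono (S i) (insert u0 (S i)) (Finset.subset_insert _ _)
      linarith [hle u0]
    -- f OPT - f (S i) ≤ k * M
    have hsum := submod_sum_bound f hsub OPT (S i)
    have hsumM : ∑ u' ∈ OPT, (f (insert u' (S i)) - f (S i)) ≤ OPT.card * M := by
      calc ∑ u' ∈ OPT, (f (insert u' (S i)) - f (S i))
          ≤ ∑ _u' ∈ OPT, M := Finset.sum_le_sum (fun u' _ => hle u')
        _ = OPT.card * M := by rw [Finset.sum_const, nsmul_eq_mul]
    have hcard : (OPT.card : ℝ) * M ≤ k * M := by
      apply mul_le_mul_of_nonneg_right _ hM0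
      exact_mod_cast hOPT
    have hOPTle : f OPT ≤ f (S i ∪ OPT) := hmono _ _ Finset.subset_union_right
    have hkey : f OPT - f (S i) ≤ k * M := by linarith
    -- greedy step
    have hstep : f (S (i+1)) - f (S i) ≥ (β / k) * (f OPT - f (S i)) := by
      have h1 : (β / k) * (f OPT - f (S i)) ≤ (β / k) * (k * M) :=
        mul_le_mul_of_nonneg_left hkey (le_of_lt hβk0)
      have h2 : (β / k) * (k * M) = β * M := by
        field_simp
      linarith [hgain, h1, h2 ▸ h1]
    -- combine with induction hypothesis
    have hr : 0 ≤ 1 - β / k := by linarith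
    have : f (S (i+1)) ≥ (1 - β/k) * f (S i) + (β/k) * f OPT := by linarith
    have hih : (1 - β/k) * f (S i) ≥ (1 - β/k) * ((1 - (1 - β/k)^i) * f OPT) :=
      mul_le_mul_of_nonneg_left ih hr
    have : f (S (i+1)) ≥ (1 - β/k) * ((1 - (1 - β/k)^i) * f OPT) + (β/k) * f OPT := by
      linarith
    calc f (S (i+1)) ≥ (1 - β/k) * ((1 - (1 - β/k)^i) * f OPT) + (β/k) * f OPT := this
      _ = (1 - (1 - β/k)^(i+1)) * f OPT := by ring
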